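/- Let K be a field with char(K) > 3, a, b ∈ K, and A = (x_A, y_A) a point on y² = x³ + ax + b with y_A ≠ 0, such that A+A has nonzero y-coordinate, (A+A)+A ≠ ±A, and A+A ≠ ±A. Then (A + A) + (A + A) = A + (A + (A + A)), where duplications use the tangent formula and the remaining sums the chord formula. -/

import Mathlib

/-- The chord construction. -/
def chord {K : Type*} [Field K] (P Q : K × K) : K × K :=
  let α := (P.2 - Q.2) / (P.1 - Q.1)
  let x := α ^ 2 - P.1 - Q.1
  (x, -P.2 + α * (P.1 - x))

/-- The tangent (duplication) construction. -/
def tangent {K : Type*} [Field K] (a : K) (P : K × K) : K × K :=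
  let α := (3 * P.1 ^ 2 + a) / (2 * P.2)
  let x := α ^ 2 - 2 * P.1
  (x, -P.2 + α * (P.1 - x))

open WeierstrassCurve.Affine WeierstrassCurve.Affine.Point

theorem quadruple_assoc {K : Type*} [Field K] (h2 : (2 : K) ≠ 0) (h3 : (3 : K) ≠ 0)
    (a b : K) (A : K × K)
    (hA : A.2 ^ 2 = A.1 ^ 3 + a * A.1 + b)
    (hy : A.2 ≠ 0) (hy2 : (tangent a A).2 ≠ 0)
    (h3A : chord (tangent a A) A ≠ A ∧ chord (tangent a A) A ≠ (A.1, -A.2))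
    (h2A : tangent a A ≠ A ∧ tangent a A ≠ (A.1, -A.2)) :
    tangent a (tangent a A) = chord A (chord A (tangent a A)) := by
  classical
  set W : WeierstrassCurve.Affine K := ⟨0, 0, 0, a, b⟩ with hW
  have ha₁ : W.a₁ = 0 := rfl
  have ha₂ : W.a₂ = 0 := rfl
  have ha₃ : W.a₃ = 0 := rfl
  have ha₄ : W.a₄ = a := rfl
  have ha₆ : W.a₆ = b := rfl
  -- basic helpers
  have hne0 : ∀ v : K, v ≠ 0 → v ≠ -v := fun v hv h => hv <|
    (mul_eq_zero.mp (show (2 : K) * v = 0 by linear_combination h)).resolve_left h2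
  have hneg : ∀ u v : K, W.negY u v = -v := fun u v => by
    simp [WeierstrassCurve.Affine.negY, ha₁, ha₃]
  have hmem : ∀ u v : K, v ^ 2 = u ^ 3 + a * u + b → W.Equation u v := fun u v h =>
    (W.equation_iff u v).mpr (by rw [ha₁, ha₂, ha₃, ha₄, ha₆]; linear_combination h)
  have heq : ∀ u v : K, W.Equation u v → v ^ 2 = u ^ 3 + a * u + b := fun u v h => by
    have := (W.equation_iff u v).mp h
    rw [ha₁, ha₂, ha₃, ha₄, ha₆] at this
    linear_combination this
  have hns : ∀ u v : K, W.Equation u v → v ≠ 0 → W.Nonsingular u v := by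
    intro u v h hv
    refine (W.nonsingular_iff u v).mpr ⟨h, Or.inr ?_⟩
    rw [ha₁, ha₃]
    intro hh
    exact hne0 v hv (by linear_combination hh)
  have hsome : ∀ {x₁ y₁ x₂ y₂ : K} (h₁ : W.Nonsingular x₁ y₁) (h₂ : W.Nonsingular x₂ y₂),
      x₁ = x₂ → y₁ = y₂ → Point.some _ _ h₁ = Point.some _ _ h₂ := by
    intro x₁ y₁ x₂ y₂ h₁ h₂ hx hy
    subst hx; subst hy; rfl
  -- point A
  have hAns : W.Nonsingular A.1 A.2 := hns _ _ (hmem _ _ hA) hy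
  have hyne : A.2 ≠ W.negY A.1 A.2 := by rw [hneg]; exact hne0 _ hy
  -- 2A = tangent a A
  have cx1 : W.addX A.1 A.1 (W.slope A.1 A.1 A.2 A.2) = (tangent a A).1 := by
    rw [slope_of_Y_ne rfl hyne]
    simp only [tangent, WeierstrassCurve.Affine.addX, WeierstrassCurve.Affine.negY,
      ha₁, ha₂, ha₃, ha₄]
    ring
  have cy1 : W.addY A.1 A.1 A.2 (W.slope A.1 A.1 A.2 A.2) = (tangent a A).2 := by
    rw [slope_of_Y_ne rfl hyne]
    simp only [tangent, WeierstrassCurve.Affine.addY, WeierstrassCurve.Affine.negAddY,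
      WeierstrassCurve.Affine.addX, WeierstrassCurve.Affine.negY, ha₁, ha₂, ha₃, ha₄]
    ring
  have hT : W.Nonsingular (tangent a A).1 (tangent a A).2 := by
    have h := nonsingular_add hAns hAns fun hh => hyne hh.2
    rwa [cx1, cy1] at h
  have hPP : Point.some _ _ hAns + Point.some _ _ hAns = Point.some _ _ hT := by
    rw [add_self_of_Y_ne hyne]; exact hsome _ _ cx1 cy1
  have hTeq : (tangent a A).2 ^ 2 = (tangent a A).1 ^ 3 + a * (tangent a A).1 + b :=
    heq _ _ hT.1
  -- x-coordinates of A and 2A differ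
  have d3 : A.1 ≠ (tangent a A).1 := by
    intro h
    have h1 : (tangent a A).2 ^ 2 = A.2 ^ 2 := by rw [hTeq, ← h, ← hA]
    have h2' : ((tangent a A).2 - A.2) * ((tangent a A).2 + A.2) = 0 := by linear_combination h1
    rcases mul_eq_zero.mp h2' with h' | h'
    · exact h2A.1 (Prod.ext h.symm (sub_eq_zero.mp h'))
    · exact h2A.2 (Prod.ext h.symm (show (tangent a A).2 = -A.2 by linear_combination h'))
  -- 3A = chord A (tangent a A)
  have cx2 : W.addX A.1 (tangent a A).1 (W.slope A.1 (tangent a A).1 A.2 (tangent a A).2) =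
      (chord A (tangent a A)).1 := by
    rw [slope_of_X_ne d3]
    simp only [chord, WeierstrassCurve.Affine.addX, ha₁, ha₂]
    ring
  have cy2 : W.addY A.1 (tangent a A).1 A.2 (W.slope A.1 (tangent a A).1 A.2 (tangent a A).2) =
      (chord A (tangent a A)).2 := by
    rw [slope_of_X_ne d3]
    simp only [chord, WeierstrassCurve.Affine.addY, WeierstrassCurve.Affine.negAddY,
      WeierstrassCurve.Affine.addX, WeierstrassCurve.Affine.negY, ha₁, ha₂, ha₃]
    ring
  have hS : W.Nonsingular (chord A (tangent a A)).1 (chord A (tangent a A)).2 := by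
    have h := nonsingular_add hAns hT fun hh => absurd hh.1 d3
    rwa [cx2, cy2] at h
  have hPT : Point.some _ _ hAns + Point.some _ _ hT = Point.some _ _ hS := by
    rw [add_of_X_ne d3]; exact hsome _ _ cx2 cy2
  have hSeq : (chord A (tangent a A)).2 ^ 2 =
      (chord A (tangent a A)).1 ^ 3 + a * (chord A (tangent a A)).1 + b := heq _ _ hS.1
  -- chord is symmetric
  have hcomm : chord (tangent a A) A = chord A (tangent a A) := by
    have hne1 : (tangent a A).1 - A.1 ≠ 0 := sub_ne_zero.mpr (Ne.symm d3)
    have hne2 : A.1 - (tangent a A).1 ≠ 0 := sub_ne_zero.mpr d3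
    simp only [chord]
    refine Prod.ext ?_ ?_ <;> field_simp <;> ring
  rw [hcomm] at h3A
  -- x-coordinates of A and 3A differ
  have d4 : A.1 ≠ (chord A (tangent a A)).1 := by
    intro h
    have h1 : (chord A (tangent a A)).2 ^ 2 = A.2 ^ 2 := by rw [hSeq, ← h, ← hA]
    have h2' : ((chord A (tangent a A)).2 - A.2) * ((chord A (tangent a A)).2 + A.2) = 0 := by
      linear_combination h1
    rcases mul_eq_zero.mp h2' with h' | h'
    · exact h3A.1 (Prod.ext h.symm (sub_eq_zero.mp h'))
    · exact h3A.2 (Prod.ext h.symm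
        (show (chord A (tangent a A)).2 = -A.2 by linear_combination h'))
  -- 4A as A + 3A
  have cx3 : W.addX A.1 (chord A (tangent a A)).1
      (W.slope A.1 (chord A (tangent a A)).1 A.2 (chord A (tangent a A)).2) =
      (chord A (chord A (tangent a A))).1 := by
    rw [slope_of_X_ne d4]
    simp only [chord, WeierstrassCurve.Affine.addX, ha₁, ha₂]
    ring
  have cy3 : W.addY A.1 (chord A (tangent a A)).1 A.2
      (W.slope A.1 (chord A (tangent a A)).1 A.2 (chord A (tangent a A)).2) =
      (chord A (chord A (tangent a A))).2 := by
    rw [slope_of_X_ne d4]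
    simp only [chord, WeierstrassCurve.Affine.addY, WeierstrassCurve.Affine.negAddY,
      WeierstrassCurve.Affine.addX, WeierstrassCurve.Affine.negY, ha₁, ha₂, ha₃]
    ring
  have hQ : W.Nonsingular (chord A (chord A (tangent a A))).1
      (chord A (chord A (tangent a A))).2 := by
    have h := nonsingular_add hAns hS fun hh => absurd hh.1 d4
    rwa [cx3, cy3] at h
  have hPS : Point.some _ _ hAns + Point.some _ _ hS = Point.some _ _ hQ := by
    rw [add_of_X_ne d4]; exact hsome _ _ cx3 cy3
  -- 4A as 2A + 2A
  have hy2ne : (tangent a A).2 ≠ W.negY (tangent a A).1 (tangent a A).2 := by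
    rw [hneg]; exact hne0 _ hy2
  have cx4 : W.addX (tangent a A).1 (tangent a A).1
      (W.slope (tangent a A).1 (tangent a A).1 (tangent a A).2 (tangent a A).2) =
      (tangent a (tangent a A)).1 := by
    rw [slope_of_Y_ne rfl hy2ne]
    simp only [tangent, WeierstrassCurve.Affine.addX, WeierstrassCurve.Affine.negY,
      ha₁, ha₂, ha₃, ha₄]
    ring
  have cy4 : W.addY (tangent a A).1 (tangent a A).1 (tangent a A).2
      (W.slope (tangent a A).1 (tangent a A).1 (tangent a A).2 (tangent a A).2) =
      (tangent a (tangent a A)).2 := by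
    rw [slope_of_Y_ne rfl hy2ne]
    simp only [tangent, WeierstrassCurve.Affine.addY, WeierstrassCurve.Affine.negAddY,
      WeierstrassCurve.Affine.addX, WeierstrassCurve.Affine.negY, ha₁, ha₂, ha₃, ha₄]
    ring
  have hTT : W.Nonsingular (tangent a (tangent a A)).1 (tangent a (tangent a A)).2 := by
    have h := nonsingular_add hT hT fun hh => hy2ne hh.2
    rwa [cx4, cy4] at h
  have hTT' : Point.some _ _ hT + Point.some _ _ hT = Point.some _ _ hTT := by
    rw [add_self_of_Y_ne hy2ne]; exact hsome _ _ cx4 cy4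
  -- associativity
  have e1 : Point.some _ _ hTT =
      Point.some _ _ hAns + Point.some _ _ hAns + (Point.some _ _ hAns + Point.some _ _ hAns) := by
    rw [hPP, hTT']
  have e2 : Point.some _ _ hQ =
      Point.some _ _ hAns + (Point.some _ _ hAns + (Point.some _ _ hAns + Point.some _ _ hAns)) := by
    rw [hPP, hPT, hPS]
  have hfin : Point.some _ _ hTT = Point.some _ _ hQ := by
    rw [e1, e2, add_assoc]
  injection hfin with hfx hfy
  exact Prod.ext hfx hfy
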